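/- Let X be a Banach space, let T = {T(t,s) : t, s > a₀} be an invertible evolution family on X exhibiting bounded growth on [a₀*,∞) with constants K, μ > 0 (so ‖T(t,s)‖ ≤ K e^{μ(t−s)} for t ≥ s ≥ a₀*), and suppose T is uniformly noncritical on [a₀*,∞) with constants θ ∈ (0,1) and C > 0. For s ≥ a₀* let S(s) := { v ∈ X : sup_{t ≥ s} ‖T(t,s)v‖ < ∞ }. Then setting D := K e^{μC}, one has ‖T(t,s)v‖ ≤ D ‖v‖ for all t ≥ s ≥ a₀* and all v ∈ S(s); in particular, sup_{t ≥ s} ‖T(t,s)v‖ = sup_{t ∈ [s, s+C]} ‖T(t,s)v‖ for v ∈ S(s). -/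

import Mathlib

open Set Real

noncomputable section

variable {X : Type*} [NormedAddCommGroup X] [NormedSpace ℝ X] [CompleteSpace X]

/-- An invertible evolution family on `X` with parameter `a₀ ∈ ℝ ∪ {-∞}` (modelled as
`EReal`), viewed as a two-parameter family `T t s` for all `t, s > a₀` (for `t < s`,
`T t s` is the inverse of `T s t`): `T t t = Id` for `t > a₀`; the two-sided cocycle
identity `T t s ∘ T s r = T t r` holds for all `t, s, r > a₀`; and for every `s > a₀`
and `v ∈ X`, the map `t ↦ T t s v` is continuous on `[s, ∞)`. -/
def IsInvertibleEvolutionFamily (a₀ : EReal) (T : ℝ → ℝ → X →L[ℝ] X) : Prop :=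
  (∀ t : ℝ, a₀ < (t : EReal) → T t t = ContinuousLinearMap.id ℝ X) ∧
  (∀ t s r : ℝ, a₀ < (t : EReal) → a₀ < (s : EReal) → a₀ < (r : EReal) →
    (T t s).comp (T s r) = T t r) ∧
  (∀ s : ℝ, a₀ < (s : EReal) → ∀ v : X, ContinuousOn (fun t => T t s v) (Set.Ici s))

/-- The stable set at time `s`: vectors with bounded forward orbit,
`S(s) = {v ∈ X : sup_{t ≥ s} ‖T t s v‖ < ∞}`. -/
def stableSet (T : ℝ → ℝ → X →L[ℝ] X) (s : ℝ) : Set X :=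
  {v : X | ∃ M : ℝ, ∀ t : ℝ, s ≤ t → ‖T t s v‖ ≤ M}

lemma aux_key
    (a₀ : EReal) (T : ℝ → ℝ → X →L[ℝ] X) (astar : ℝ) (K μ θ C : ℝ)
    (hT : IsInvertibleEvolutionFamily a₀ T)
    (hastar : a₀ < (astar : EReal))
    (hK : 0 < K) (hμ : 0 < μ)
    (hgrowth : ∀ t : ℝ, astar ≤ t → ∀ s : ℝ, astar ≤ s → s ≤ t →
      ‖T t s‖ ≤ K * Real.exp (μ * (t - s)))
    (hθ : 0 < θ) (hθ1 : θ < 1) (hC : 0 < C)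
    (hnc : ∀ (v : X) (t : ℝ), astar + C ≤ t →
      ∀ M : ℝ, (∀ u : ℝ, a₀ < (u : EReal) → |u - t| ≤ C → ‖T u t v‖ ≤ M) → ‖v‖ ≤ θ * M)
    (s : ℝ) (v : X) (hs : astar ≤ s) (hv : v ∈ stableSet T s) :
    (∀ t : ℝ, s ≤ t → ‖T t s v‖ ≤ K * Real.exp (μ * C) * ‖v‖) ∧
    sSup ((fun t => ‖T t s v‖) '' Set.Ici s) =
      sSup ((fun t => ‖T t s v‖) '' Set.Icc s (s + C)) := by
  obtain ⟨hid, hcoc, hcont⟩ := hT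
  obtain ⟨M0, hM0⟩ := hv
  have ha : ∀ x : ℝ, astar ≤ x → a₀ < (x : EReal) := fun x hx =>
    lt_of_lt_of_le hastar (by exact_mod_cast hx)
  have hbdd : BddAbove ((fun t => ‖T t s v‖) '' Set.Ici s) := by
    refine ⟨M0, ?_⟩
    rintro x ⟨t, ht, rfl⟩
    exact hM0 t ht
  have hne : ((fun t => ‖T t s v‖) '' Set.Ici s).Nonempty :=
    ⟨_, ⟨s, self_mem_Ici, rfl⟩⟩
  set B := sSup ((fun t => ‖T t s v‖) '' Set.Ici s) with hBdef
  have hgB : ∀ t : ℝ, s ≤ t → ‖T t s v‖ ≤ B := fun t ht =>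
    le_csSup hbdd ⟨t, ht, rfl⟩
  have hB0 : 0 ≤ B := le_trans (norm_nonneg _) (hgB s le_rfl)
  -- noncriticality step
  have hnc' : ∀ t : ℝ, s + C ≤ t → ‖T t s v‖ ≤ θ * B := by
    intro t ht
    refine hnc (T t s v) t (by linarith) B ?_
    intro u hu hut
    have hus : s ≤ u := by
      have := (abs_le.mp hut).1
      linarith
    have h1 : (T u t).comp (T t s) = T u s :=
      hcoc u t s hu (ha t (by linarith)) (ha s hs)
    calc ‖T u t (T t s v)‖ = ‖T u s v‖ := by
          rw [← ContinuousLinearMap.comp_apply, h1]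
      _ ≤ B := hgB u hus
  -- growth step on [s, s+C]
  have hgrow : ∀ t : ℝ, s ≤ t → t ≤ s + C → ‖T t s v‖ ≤ K * Real.exp (μ * C) * ‖v‖ := by
    intro t h1 h2
    have hop : ‖T t s‖ ≤ K * Real.exp (μ * (t - s)) := hgrowth t (hs.trans h1) s hs h1
    have hexp : Real.exp (μ * (t - s)) ≤ Real.exp (μ * C) := by
      apply Real.exp_le_exp.mpr
      nlinarith
    calc ‖T t s v‖ ≤ ‖T t s‖ * ‖v‖ := (T t s).le_opNorm v
      _ ≤ (K * Real.exp (μ * (t - s))) * ‖v‖ :=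
          mul_le_mul_of_nonneg_right hop (norm_nonneg v)
      _ ≤ K * Real.exp (μ * C) * ‖v‖ := by
          have := mul_le_mul_of_nonneg_left hexp hK.le
          exact mul_le_mul_of_nonneg_right this (norm_nonneg v)
  constructor
  · -- first conclusion
    have hBD : B ≤ K * Real.exp (μ * C) * ‖v‖ := by
      have hmax : B ≤ max (K * Real.exp (μ * C) * ‖v‖) (θ * B) := by
        apply csSup_le hne
        rintro x ⟨t, ht, rfl⟩
        rcases le_or_gt t (s + C) with h | h
        · exact le_max_of_le_left (hgrow t ht h)
        · exact le_max_of_le_right (hnc' t h.le)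
      rcases le_max_iff.mp hmax with h | h
      · exact h
      · have hBle : B ≤ 0 := by nlinarith
        have : (0 : ℝ) ≤ K * Real.exp (μ * C) * ‖v‖ := by positivity
        linarith
    exact fun t ht => le_trans (hgB t ht) hBD
  · -- second conclusion
    have hbddA : BddAbove ((fun t => ‖T t s v‖) '' Set.Icc s (s + C)) :=
      BddAbove.mono (Set.image_mono Set.Icc_subset_Ici_self) hbdd
    have hmemA : ‖T s s v‖ ∈ (fun t => ‖T t s v‖) '' Set.Icc s (s + C) :=
      ⟨s, ⟨le_rfl, by linarith⟩, rfl⟩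
    have hA0 : 0 ≤ sSup ((fun t => ‖T t s v‖) '' Set.Icc s (s + C)) :=
      le_trans (norm_nonneg _) (le_csSup hbddA hmemA)
    have hgA : ∀ t : ℝ, s ≤ t → t ≤ s + C →
        ‖T t s v‖ ≤ sSup ((fun t => ‖T t s v‖) '' Set.Icc s (s + C)) := fun t h1 h2 =>
      le_csSup hbddA ⟨t, ⟨h1, h2⟩, rfl⟩
    have hAB : sSup ((fun t => ‖T t s v‖) '' Set.Icc s (s + C)) ≤ B :=
      csSup_le_csSup hbdd ⟨_, hmemA⟩ (Set.image_mono Set.Icc_subset_Ici_self)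
    have hBA : B ≤ sSup ((fun t => ‖T t s v‖) '' Set.Icc s (s + C)) := by
      have hmax : B ≤ max (sSup ((fun t => ‖T t s v‖) '' Set.Icc s (s + C))) (θ * B) := by
        apply csSup_le hne
        rintro x ⟨t, ht, rfl⟩
        rcases le_or_gt t (s + C) with h | h
        · exact le_max_of_le_left (hgA t ht h)
        · exact le_max_of_le_right (hnc' t h.le)
      rcases le_max_iff.mp hmax with h | h
      · exact h
      · have hBle : B ≤ 0 := by nlinarith
        linarith
    exact le_antisymm hBA hAB

/-- Let `T` be an invertible evolution family with bounded growth on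
`[a₀*, ∞)` with constants `K, μ > 0`, and uniformly noncritical on `[a₀*, ∞)` with
constants `θ ∈ (0,1)` and `C > 0`. Then with `D := K e^{μ C}` one has
`‖T t s v‖ ≤ D ‖v‖` for all `t ≥ s ≥ a₀*` and `v ∈ S(s)`; in particular,
`sup_{t ≥ s} ‖T t s v‖ = sup_{t ∈ [s, s+C]} ‖T t s v‖` for `v ∈ S(s)`. -/
theorem unifNoncritical_boundedGrowth_uniform_bound_on_stableSet
    (a₀ : EReal) (T : ℝ → ℝ → X →L[ℝ] X) (astar : ℝ) (K μ θ C : ℝ)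
    (hT : IsInvertibleEvolutionFamily a₀ T)
    (hastar : a₀ < (astar : EReal))
    (hK : 0 < K) (hμ : 0 < μ)
    (hgrowth : ∀ t : ℝ, astar ≤ t → ∀ s : ℝ, astar ≤ s → s ≤ t →
      ‖T t s‖ ≤ K * Real.exp (μ * (t - s)))
    (hθ : 0 < θ) (hθ1 : θ < 1) (hC : 0 < C)
    (hnc : ∀ (v : X) (t : ℝ), astar + C ≤ t →
      ∀ M : ℝ, (∀ u : ℝ, a₀ < (u : EReal) → |u - t| ≤ C → ‖T u t v‖ ≤ M) → ‖v‖ ≤ θ * M) :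
    (∀ (t s : ℝ) (v : X), astar ≤ s → s ≤ t → v ∈ stableSet T s →
      ‖T t s v‖ ≤ K * Real.exp (μ * C) * ‖v‖) ∧
    (∀ (s : ℝ) (v : X), astar ≤ s → v ∈ stableSet T s →
      sSup ((fun t => ‖T t s v‖) '' Set.Ici s) =
        sSup ((fun t => ‖T t s v‖) '' Set.Icc s (s + C))) := by
  constructor
  · intro t s v hs hst hv
    exact (aux_key a₀ T astar K μ θ C hT hastar hK hμ hgrowth hθ hθ1 hC hnc s v hs hv).1 t hst
  · intro s v hs hv
    exact (aux_key a₀ T astar K μ θ C hT hastar hK hμ hgrowth hθ hθ1 hC hnc s v hs hv).2
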